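/- Let ψ : ℝ^{α+2} → ℝ and φ : ℝ^{β+2} → ℝ be c-Lipschitz for the sup metric, t > 1, M ≥ 1, and let f¹, f² both be (t,M)-close to ψ and g¹, g² both be (t,M)-close to φ. For l = 1, 2 let (F^l(i,j), G^l(i,j)) be the rational state system for (f^l, g^l) with positive initial data (z_i(1))_i, (w^j(1))_j. Suppose positive double sequences (z(i,j)), (w(i,j)) satisfy z(i,0) = z_i(2), w(0,j) = w^j(2) and the dynamical inequalities f¹(w(i,j), z(i,j), …, z(i+α,j)) ≤ z(i,j+1) ≤ f²(w(i,j), z(i,j), …, z(i+α,j)) and g¹(w(i,j), z(i,j), …, z(i+β,j)) ≤ w(i+1,j) ≤ g²(w(i,j), z(i,j), …, z(i+β,j)), where ρ ≥ 1 satisfies (z_i(1)/z_i(2))^{±1} ≤ ρ and (w^j(1)/w^j(2))^{±1} ≤ ρ for all i, j. Then for l = 1, 2 and all i, j: max(F^l(i,j+1)/z(i,j+1), z(i,j+1)/F^l(i,j+1)) ≤ M^{4·P_{i+j(γ+1)}(c)} · ρ^{c̃^{i+1+j(γ+1)}} and max(G^l(i+1,j)/w(i+1,j), w(i+1,j)/G^l(i+1,j))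 ≤ M^{4·P_{i+j(γ+1)}(c)} · ρ^{c̃^{i+1+j(γ+1)}}. -/

import Mathlib

lemma aux_log_ratio {a b ρ : ℝ} (ha : 0 < a) (hb : 0 < b)
    (h1 : a / b ≤ ρ) (h2 : b / a ≤ ρ) : |Real.log a - Real.log b| ≤ Real.log ρ := by
  rw [abs_le]
  constructor
  · have := Real.log_le_log (div_pos hb ha) h2
    rw [Real.log_div hb.ne' ha.ne'] at this
    linarith
  · have := Real.log_le_log (div_pos ha hb) h1
    rw [Real.log_div ha.ne' hb.ne'] at this
    linarith

lemma aux_ratio_of_log {a b R : ℝ} (ha : 0 < a) (hb : 0 < b) (hR : 0 < R)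
    (h : |Real.log a - Real.log b| ≤ Real.log R) :
    max (a / b) (b / a) ≤ R := by
  rw [abs_le] at h
  have key : ∀ x y : ℝ, 0 < x → 0 < y → Real.log x - Real.log y ≤ Real.log R → x / y ≤ R := by
    intro x y hx hy hxy
    have h1 : Real.log (x / y) ≤ Real.log R := by
      rw [Real.log_div hx.ne' hy.ne']; exact hxy
    calc x / y = Real.exp (Real.log (x / y)) := (Real.exp_log (div_pos hx hy)).symm
      _ ≤ Real.exp (Real.log R) := Real.exp_le_exp.2 h1
      _ = R := Real.exp_log hR
  exact max_le (key a b ha hb h.2) (key b a hb ha (by linarith))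

lemma aux_step {N : ℕ} {c m lt : ℝ} (hc : 0 ≤ c) (hlt : 0 < lt)
    {ψ : (Fin N → ℝ) → ℝ} (hψ : ∀ v w : Fin N → ℝ, |ψ v - ψ w| ≤ c * dist v w)
    {f1 f2 : (Fin N → ℝ) → ℝ}
    (hf1pos : ∀ v, (∀ k, 0 < v k) → 0 < f1 v)
    (hf1 : ∀ v, (∀ k, 0 < v k) →
      |Real.log (f1 v) - lt * ψ (fun k => Real.log (v k) / lt)| ≤ m)
    (hf2 : ∀ v, (∀ k, 0 < v k) →
      |Real.log (f2 v) - lt * ψ (fun k => Real.log (v k) / lt)| ≤ m)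
    {v v' : Fin N → ℝ} (hv : ∀ k, 0 < v k) (hv' : ∀ k, 0 < v' k)
    {a b : ℝ} (ha : 0 < a) (hab1 : f1 v' ≤ a) (hab2 : a ≤ f2 v')
    (hb : |Real.log b - lt * ψ (fun k => Real.log (v k) / lt)| ≤ m)
    {D : ℝ} (hD : 0 ≤ D) (hdist : ∀ k, |Real.log (v k) - Real.log (v' k)| ≤ D) :
    |Real.log b - Real.log a| ≤ 2 * m + c * D := by
  have hloga_low : Real.log (f1 v') ≤ Real.log a := Real.log_le_log (hf1pos v' hv') hab1
  have hloga_high : Real.log a ≤ Real.log (f2 v') := Real.log_le_log ha hab2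
  obtain ⟨h1l, h1r⟩ := abs_le.1 (hf1 v' hv')
  obtain ⟨h2l, h2r⟩ := abs_le.1 (hf2 v' hv')
  obtain ⟨hbl, hbr⟩ := abs_le.1 hb
  have hψd : |lt * ψ (fun k => Real.log (v k) / lt) - lt * ψ (fun k => Real.log (v' k) / lt)|
      ≤ c * D := by
    rw [← mul_sub, abs_mul, abs_of_pos hlt]
    have hd : dist (fun k => Real.log (v k) / lt) (fun k => Real.log (v' k) / lt) ≤ D / lt := by
      rw [dist_pi_le_iff (div_nonneg hD hlt.le)]
      intro k
      rw [Real.dist_eq, div_sub_div_same, abs_div, abs_of_pos hlt]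
      gcongr
      exact hdist k
    calc lt * |ψ (fun k => Real.log (v k) / lt) - ψ (fun k => Real.log (v' k) / lt)|
        ≤ lt * (c * (D / lt)) := by
          refine mul_le_mul_of_nonneg_left ((hψ _ _).trans ?_) hlt.le
          exact mul_le_mul_of_nonneg_left hd hc
      _ = c * D := by field_simp
  obtain ⟨hψl, hψr⟩ := abs_le.1 hψd
  rw [abs_le]
  constructor <;> linarith

noncomputable def auxA (c m r ct : ℝ) (n : ℕ) : ℝ :=
  2 * m * (∑ k ∈ Finset.range (n + 1), c ^ k) + ct ^ (n + 1) * r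

lemma auxA_facts {c m r ct : ℝ} (hc : 0 ≤ c) (hm : 0 ≤ m) (hr : 0 ≤ r)
    (hct : 1 ≤ ct) (hcct : c ≤ ct) :
    (∀ n, 0 ≤ auxA c m r ct n) ∧ (∀ n, r ≤ auxA c m r ct n) ∧
    (∀ a b : ℕ, a ≤ b → auxA c m r ct a ≤ auxA c m r ct b) ∧
    (2 * m + c * r ≤ auxA c m r ct 0) ∧
    (∀ n, 2 * m + c * auxA c m r ct n ≤ auxA c m r ct (n + 1)) := by
  have hct0 : 0 ≤ ct := le_trans zero_le_one hct
  have hS0 : ∀ n : ℕ, 0 ≤ ∑ k ∈ Finset.range (n + 1), c ^ k :=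
    fun n => Finset.sum_nonneg fun k _ => pow_nonneg hc k
  have hS1 : ∀ n : ℕ, 1 ≤ ∑ k ∈ Finset.range (n + 1), c ^ k := by
    intro n
    have := Finset.single_le_sum (f := fun k => c ^ k)
      (fun k _ => pow_nonneg hc k) (Finset.mem_range.2 (Nat.succ_pos n))
    simpa using this
  have hSmono : ∀ a b : ℕ, a ≤ b →
      (∑ k ∈ Finset.range (a + 1), c ^ k) ≤ ∑ k ∈ Finset.range (b + 1), c ^ k := by
    intro a b hab
    exact Finset.sum_le_sum_of_subset_of_nonneg
      (Finset.range_subset_range.2 (by omega)) (fun k _ _ => pow_nonneg hc k)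
  have hpow1 : ∀ n : ℕ, 1 ≤ ct ^ n := by
    intro n
    have := pow_le_pow_right₀ hct (Nat.zero_le n)
    simpa using this
  refine ⟨?_, ?_, ?_, ?_, ?_⟩
  · intro n
    exact add_nonneg (mul_nonneg (by linarith) (hS0 n))
      (mul_nonneg (pow_nonneg hct0 _) hr)
  · intro n
    have h1 : r = 1 * r := (one_mul r).symm
    have : 1 * r ≤ ct ^ (n + 1) * r := mul_le_mul_of_nonneg_right (hpow1 (n + 1)) hr
    have h2 : 0 ≤ 2 * m * (∑ k ∈ Finset.range (n + 1), c ^ k) :=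
      mul_nonneg (by linarith) (hS0 n)
    unfold auxA; linarith
  · intro a b hab
    unfold auxA
    have h1 := hSmono a b hab
    have h2 : ct ^ (a + 1) ≤ ct ^ (b + 1) := pow_le_pow_right₀ hct (by omega)
    have := mul_le_mul_of_nonneg_right h2 hr
    nlinarith
  · have h0 : auxA c m r ct 0 = 2 * m + ct * r := by simp [auxA]
    have := mul_le_mul_of_nonneg_right hcct hr
    linarith [h0]
  · intro n
    unfold auxA
    have hgeom : ∑ k ∈ Finset.range (n + 1 + 1), c ^ k
        = c * ∑ k ∈ Finset.range (n + 1), c ^ k + 1 := geom_sum_succ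
    have hp : ct ^ (n + 1 + 1) = ct * ct ^ (n + 1) := by ring
    rw [hgeom, hp]
    have h3 : c * (ct ^ (n + 1) * r) ≤ ct * (ct ^ (n + 1) * r) :=
      mul_le_mul_of_nonneg_right hcct (mul_nonneg (pow_nonneg hct0 _) hr)
    nlinarith

lemma aux_sysPos {α β : ℕ} {f : (Fin (α + 2) → ℝ) → ℝ} {g : (Fin (β + 2) → ℝ) → ℝ}
    (hf : ∀ v, (∀ k, 0 < v k) → 0 < f v) (hg : ∀ v, (∀ k, 0 < v k) → 0 < g v)
    {z0 w0 : ℕ → ℝ} (hz0 : ∀ i, 0 < z0 i) (hw0 : ∀ j, 0 < w0 j)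
    {F G : ℕ → ℕ → ℝ}
    (hF0 : ∀ i, F i 0 = z0 i) (hG0 : ∀ j, G 0 j = w0 j)
    (hF : ∀ i j, F i (j + 1) = f (Fin.cons (G i j) (fun k : Fin (α + 1) => F (i + (k : ℕ)) j)))
    (hG : ∀ i j, G (i + 1) j = g (Fin.cons (G i j) (fun k : Fin (β + 1) => F (i + (k : ℕ)) j))) :
    ∀ j, (∀ i, 0 < F i j) ∧ (∀ i, 0 < G i j) := by
  intro j
  induction j with
  | zero =>
    have hFpos : ∀ i, 0 < F i 0 := fun i => by rw [hF0]; exact hz0 i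
    refine ⟨hFpos, ?_⟩
    intro i
    induction i with
    | zero => rw [hG0]; exact hw0 0
    | succ i ih =>
      rw [hG]
      apply hg
      intro k
      refine Fin.cases ?_ (fun k' => ?_) k
      · simpa using ih
      · simp only [Fin.cons_succ]; exact hFpos _
  | succ j ih =>
    have hFpos : ∀ i, 0 < F i (j + 1) := by
      intro i; rw [hF]
      apply hf
      intro k
      refine Fin.cases ?_ (fun k' => ?_) k
      · simpa using ih.2 i
      · simp only [Fin.cons_succ]; exact ih.1 _
    refine ⟨hFpos, ?_⟩
    intro i
    induction i with
    | zero => rw [hG0]; exact hw0 _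
    | succ i ihi =>
      rw [hG]; apply hg
      intro k
      refine Fin.cases ?_ (fun k' => ?_) k
      · simpa using ihi
      · simp only [Fin.cons_succ]; exact hFpos _




/-- dynamical inequalities with different initial data. If positive
sequences `(z, w)` satisfy the dynamical inequalities between `(f¹, g¹)` and `(f², g²)`
— all `(t,M)`-close to the same `c`-Lipschitz pair `(ψ, φ)` — with initial data at
ratio at most `ρ` from that of the rational state systems `(F^l, G^l)`, then the
ratios are bounded by `M^{4 P_{i+j(γ+1)}(c)} · ρ^{c̃^{i+1+j(γ+1)}}`. -/
theorem statement11 (α β : ℕ) (c t M : ℝ) (hc : 0 ≤ c) (ht : 1 < t) (hM : 1 ≤ M)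
    (ψ : (Fin (α + 2) → ℝ) → ℝ) (φ : (Fin (β + 2) → ℝ) → ℝ)
    (hψ : ∀ v w : Fin (α + 2) → ℝ, |ψ v - ψ w| ≤ c * dist v w)
    (hφ : ∀ v w : Fin (β + 2) → ℝ, |φ v - φ w| ≤ c * dist v w)
    (f1 f2 : (Fin (α + 2) → ℝ) → ℝ) (g1 g2 : (Fin (β + 2) → ℝ) → ℝ)
    (hf1pos : ∀ v : Fin (α + 2) → ℝ, (∀ k, 0 < v k) → 0 < f1 v)
    (hf2pos : ∀ v : Fin (α + 2) → ℝ, (∀ k, 0 < v k) → 0 < f2 v)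
    (hg1pos : ∀ v : Fin (β + 2) → ℝ, (∀ k, 0 < v k) → 0 < g1 v)
    (hg2pos : ∀ v : Fin (β + 2) → ℝ, (∀ k, 0 < v k) → 0 < g2 v)
    (hf1 : ∀ v : Fin (α + 2) → ℝ, (∀ k, 0 < v k) →
      |Real.log (f1 v) / Real.log t - ψ (fun k => Real.log (v k) / Real.log t)|
        ≤ Real.log M / Real.log t)
    (hf2 : ∀ v : Fin (α + 2) → ℝ, (∀ k, 0 < v k) →
      |Real.log (f2 v) / Real.log t - ψ (fun k => Real.log (v k) / Real.log t)|
        ≤ Real.log M / Real.log t)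
    (hg1 : ∀ v : Fin (β + 2) → ℝ, (∀ k, 0 < v k) →
      |Real.log (g1 v) / Real.log t - φ (fun k => Real.log (v k) / Real.log t)|
        ≤ Real.log M / Real.log t)
    (hg2 : ∀ v : Fin (β + 2) → ℝ, (∀ k, 0 < v k) →
      |Real.log (g2 v) / Real.log t - φ (fun k => Real.log (v k) / Real.log t)|
        ≤ Real.log M / Real.log t)
    (z01 w01 z02 w02 : ℕ → ℝ)
    (hz01 : ∀ i, 0 < z01 i) (hw01 : ∀ j, 0 < w01 j)
    (hz02 : ∀ i, 0 < z02 i) (hw02 : ∀ j, 0 < w02 j)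
    (F1 G1 F2 G2 : ℕ → ℕ → ℝ)
    (hF10 : ∀ i, F1 i 0 = z01 i) (hG10 : ∀ j, G1 0 j = w01 j)
    (hF1 : ∀ i j, F1 i (j + 1) = f1 (Fin.cons (G1 i j) (fun k : Fin (α + 1) => F1 (i + (k : ℕ)) j)))
    (hG1 : ∀ i j, G1 (i + 1) j = g1 (Fin.cons (G1 i j) (fun k : Fin (β + 1) => F1 (i + (k : ℕ)) j)))
    (hF20 : ∀ i, F2 i 0 = z01 i) (hG20 : ∀ j, G2 0 j = w01 j)
    (hF2 : ∀ i j, F2 i (j + 1) = f2 (Fin.cons (G2 i j) (fun k : Fin (α + 1) => F2 (i + (k : ℕ)) j)))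
    (hG2 : ∀ i j, G2 (i + 1) j = g2 (Fin.cons (G2 i j) (fun k : Fin (β + 1) => F2 (i + (k : ℕ)) j)))
    (z w : ℕ → ℕ → ℝ) (hzpos : ∀ i j, 0 < z i j) (hwpos : ∀ i j, 0 < w i j)
    (hz0' : ∀ i, z i 0 = z02 i) (hw0' : ∀ j, w 0 j = w02 j)
    (hzlow : ∀ i j, f1 (Fin.cons (w i j) (fun k : Fin (α + 1) => z (i + (k : ℕ)) j)) ≤ z i (j + 1))
    (hzhigh : ∀ i j, z i (j + 1) ≤ f2 (Fin.cons (w i j) (fun k : Fin (α + 1) => z (i + (k : ℕ)) j)))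
    (hwlow : ∀ i j, g1 (Fin.cons (w i j) (fun k : Fin (β + 1) => z (i + (k : ℕ)) j)) ≤ w (i + 1) j)
    (hwhigh : ∀ i j, w (i + 1) j ≤ g2 (Fin.cons (w i j) (fun k : Fin (β + 1) => z (i + (k : ℕ)) j)))
    (ρ : ℝ) (hρ : 1 ≤ ρ)
    (hρz : ∀ i, z01 i / z02 i ≤ ρ ∧ z02 i / z01 i ≤ ρ)
    (hρw : ∀ j, w01 j / w02 j ≤ ρ ∧ w02 j / w01 j ≤ ρ) :
    ∀ i j : ℕ,
      max (F1 i (j + 1) / z i (j + 1)) (z i (j + 1) / F1 i (j + 1))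
        ≤ M ^ (4 * ∑ k ∈ Finset.range (i + j * (max α β + 1) + 1), c ^ k)
          * ρ ^ ((max c 1) ^ (i + 1 + j * (max α β + 1))) ∧
      max (F2 i (j + 1) / z i (j + 1)) (z i (j + 1) / F2 i (j + 1))
        ≤ M ^ (4 * ∑ k ∈ Finset.range (i + j * (max α β + 1) + 1), c ^ k)
          * ρ ^ ((max c 1) ^ (i + 1 + j * (max α β + 1))) ∧
      max (G1 (i + 1) j / w (i + 1) j) (w (i + 1) j / G1 (i + 1) j)
        ≤ M ^ (4 * ∑ k ∈ Finset.range (i + j * (max α β + 1) + 1), c ^ k)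
          * ρ ^ ((max c 1) ^ (i + 1 + j * (max α β + 1))) ∧
      max (G2 (i + 1) j / w (i + 1) j) (w (i + 1) j / G2 (i + 1) j)
        ≤ M ^ (4 * ∑ k ∈ Finset.range (i + j * (max α β + 1) + 1), c ^ k)
          * ρ ^ ((max c 1) ^ (i + 1 + j * (max α β + 1))) := by
  
  intro i₀ j₀
  have hM0 : (0:ℝ) < M := lt_of_lt_of_le one_pos hM
  have hρ0 : (0:ℝ) < ρ := lt_of_lt_of_le one_pos hρ
  have hlt : 0 < Real.log t := Real.log_pos ht
  set m := Real.log M with hm_def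
  set r := Real.log ρ with hr_def
  set ct := max c 1 with hct_def
  have hm : 0 ≤ m := Real.log_nonneg hM
  have hr : 0 ≤ r := Real.log_nonneg hρ
  have hct : 1 ≤ ct := le_max_right _ _
  have hcct : c ≤ ct := le_max_left _ _
  obtain ⟨hA0, hrA, hAmono, hAz, hAs⟩ := auxA_facts (c := c) (m := m) (r := r) (ct := ct)
    hc hm hr hct hcct
  -- convert closeness hypotheses to multiplied form
  have conv : ∀ {N : ℕ} (f : (Fin N → ℝ) → ℝ) (ψ' : (Fin N → ℝ) → ℝ),
      (∀ v, (∀ k, 0 < v k) →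
        |Real.log (f v) / Real.log t - ψ' (fun k => Real.log (v k) / Real.log t)|
          ≤ Real.log M / Real.log t) →
      ∀ v, (∀ k, 0 < v k) →
        |Real.log (f v) - Real.log t * ψ' (fun k => Real.log (v k) / Real.log t)| ≤ m := by
    intro N f ψ' h v hv
    have h' := h v hv
    have heq : Real.log (f v) - Real.log t * ψ' (fun k => Real.log (v k) / Real.log t)
        = Real.log t * (Real.log (f v) / Real.log t
            - ψ' (fun k => Real.log (v k) / Real.log t)) := by
      field_simp
    rw [heq, abs_mul, abs_of_pos hlt]
    calc Real.log t * |Real.log (f v) / Real.log t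
          - ψ' (fun k => Real.log (v k) / Real.log t)|
        ≤ Real.log t * (Real.log M / Real.log t) := mul_le_mul_of_nonneg_left h' hlt.le
      _ = m := by field_simp; rfl
  have hf1' := conv f1 ψ hf1
  have hf2' := conv f2 ψ hf2
  have hg1' := conv g1 φ hg1
  have hg2' := conv g2 φ hg2
  have hP1 := aux_sysPos hf1pos hg1pos hz01 hw01 hF10 hG10 hF1 hG1
  have hP2 := aux_sysPos hf2pos hg2pos hz01 hw01 hF20 hG20 hF2 hG2
  -- key induction
  have key : ∀ n : ℕ, ∀ i j : ℕ, i + j * (max α β + 1) = n →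
      |Real.log (F1 i (j + 1)) - Real.log (z i (j + 1))| ≤ auxA c m r ct n ∧
      |Real.log (F2 i (j + 1)) - Real.log (z i (j + 1))| ≤ auxA c m r ct n ∧
      |Real.log (G1 (i + 1) j) - Real.log (w (i + 1) j)| ≤ auxA c m r ct n ∧
      |Real.log (G2 (i + 1) j) - Real.log (w (i + 1) j)| ≤ auxA c m r ct n := by
    intro n
    induction n using Nat.strong_induction_on with
    | _ n IH =>
    intro i j hij
    obtain ⟨D, hD0, hrD, hstepD, hIHD⟩ : ∃ D : ℝ, 0 ≤ D ∧ r ≤ D ∧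
        2 * m + c * D ≤ auxA c m r ct n ∧
        ∀ n' : ℕ, n' < n → auxA c m r ct n' ≤ D := by
      match n with
      | 0 => exact ⟨r, hr, le_rfl, hAz, fun n' h => absurd h (Nat.not_lt_zero _)⟩
      | (n + 1) =>
        exact ⟨auxA c m r ct n, hA0 n, hrA n, hAs n,
          fun n' h => hAmono n' n (Nat.lt_succ_iff.1 h)⟩
    have hwcomp : |Real.log (G1 i j) - Real.log (w i j)| ≤ D ∧
        |Real.log (G2 i j) - Real.log (w i j)| ≤ D := by
      cases i with
      | zero =>
        rw [hG10, hG20, hw0']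
        exact ⟨(aux_log_ratio (hw01 j) (hw02 j) (hρw j).1 (hρw j).2).trans hrD,
          (aux_log_ratio (hw01 j) (hw02 j) (hρw j).1 (hρw j).2).trans hrD⟩
      | succ i =>
        have hlt' : i + j * (max α β + 1) < n := by omega
        obtain ⟨_, _, h3, h4⟩ := IH _ hlt' i j rfl
        exact ⟨h3.trans (hIHD _ hlt'), h4.trans (hIHD _ hlt')⟩
    have hzcomp : ∀ k : ℕ, k ≤ max α β →
        |Real.log (F1 (i + k) j) - Real.log (z (i + k) j)| ≤ D ∧
        |Real.log (F2 (i + k) j) - Real.log (z (i + k) j)| ≤ D := by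
      intro k hk
      cases j with
      | zero =>
        rw [hF10, hF20, hz0']
        exact ⟨(aux_log_ratio (hz01 (i + k)) (hz02 (i + k)) (hρz (i + k)).1
            (hρz (i + k)).2).trans hrD,
          (aux_log_ratio (hz01 (i + k)) (hz02 (i + k)) (hρz (i + k)).1
            (hρz (i + k)).2).trans hrD⟩
      | succ j =>
        have hmul : (j + 1) * (max α β + 1) = j * (max α β + 1) + (max α β + 1) := by ring
        have hlt' : (i + k) + j * (max α β + 1) < n := by omega
        obtain ⟨h1, h2, _, _⟩ := IH _ hlt' (i + k) j rfl
        exact ⟨h1.trans (hIHD _ hlt'), h2.trans (hIHD _ hlt')⟩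
    have hv'α : ∀ k, 0 < (Fin.cons (w i j) (fun k : Fin (α + 1) => z (i + (k : ℕ)) j)
        : Fin (α + 2) → ℝ) k := by
      intro k
      refine Fin.cases ?_ (fun k' => ?_) k
      · simpa using hwpos i j
      · simp only [Fin.cons_succ]; exact hzpos _ _
    have hv'β : ∀ k, 0 < (Fin.cons (w i j) (fun k : Fin (β + 1) => z (i + (k : ℕ)) j)
        : Fin (β + 2) → ℝ) k := by
      intro k
      refine Fin.cases ?_ (fun k' => ?_) k
      · simpa using hwpos i j
      · simp only [Fin.cons_succ]; exact hzpos _ _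
    have hv1α : ∀ k, 0 < (Fin.cons (G1 i j) (fun k : Fin (α + 1) => F1 (i + (k : ℕ)) j)
        : Fin (α + 2) → ℝ) k := by
      intro k
      refine Fin.cases ?_ (fun k' => ?_) k
      · simpa using (hP1 j).2 i
      · simp only [Fin.cons_succ]; exact (hP1 j).1 _
    have hv2α : ∀ k, 0 < (Fin.cons (G2 i j) (fun k : Fin (α + 1) => F2 (i + (k : ℕ)) j)
        : Fin (α + 2) → ℝ) k := by
      intro k
      refine Fin.cases ?_ (fun k' => ?_) k
      · simpa using (hP2 j).2 i
      · simp only [Fin.cons_succ]; exact (hP2 j).1 _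
    have hv1β : ∀ k, 0 < (Fin.cons (G1 i j) (fun k : Fin (β + 1) => F1 (i + (k : ℕ)) j)
        : Fin (β + 2) → ℝ) k := by
      intro k
      refine Fin.cases ?_ (fun k' => ?_) k
      · simpa using (hP1 j).2 i
      · simp only [Fin.cons_succ]; exact (hP1 j).1 _
    have hv2β : ∀ k, 0 < (Fin.cons (G2 i j) (fun k : Fin (β + 1) => F2 (i + (k : ℕ)) j)
        : Fin (β + 2) → ℝ) k := by
      intro k
      refine Fin.cases ?_ (fun k' => ?_) k
      · simpa using (hP2 j).2 i
      · simp only [Fin.cons_succ]; exact (hP2 j).1 _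
    have hdistα1 : ∀ k : Fin (α + 2),
        |Real.log ((Fin.cons (G1 i j) (fun k : Fin (α + 1) => F1 (i + (k : ℕ)) j)
            : Fin (α + 2) → ℝ) k)
          - Real.log ((Fin.cons (w i j) (fun k : Fin (α + 1) => z (i + (k : ℕ)) j)
            : Fin (α + 2) → ℝ) k)| ≤ D := by
      intro k
      refine Fin.cases ?_ (fun k' => ?_) k
      · simp only [Fin.cons_zero]; exact hwcomp.1
      · simp only [Fin.cons_succ]
        exact (hzcomp k' ((Fin.is_le k').trans (le_max_left α β))).1
    have hdistα2 : ∀ k : Fin (α + 2),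
        |Real.log ((Fin.cons (G2 i j) (fun k : Fin (α + 1) => F2 (i + (k : ℕ)) j)
            : Fin (α + 2) → ℝ) k)
          - Real.log ((Fin.cons (w i j) (fun k : Fin (α + 1) => z (i + (k : ℕ)) j)
            : Fin (α + 2) → ℝ) k)| ≤ D := by
      intro k
      refine Fin.cases ?_ (fun k' => ?_) k
      · simp only [Fin.cons_zero]; exact hwcomp.2
      · simp only [Fin.cons_succ]
        exact (hzcomp k' ((Fin.is_le k').trans (le_max_left α β))).2
    have hdistβ1 : ∀ k : Fin (β + 2),
        |Real.log ((Fin.cons (G1 i j) (fun k : Fin (β + 1) => F1 (i + (k : ℕ)) j)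
            : Fin (β + 2) → ℝ) k)
          - Real.log ((Fin.cons (w i j) (fun k : Fin (β + 1) => z (i + (k : ℕ)) j)
            : Fin (β + 2) → ℝ) k)| ≤ D := by
      intro k
      refine Fin.cases ?_ (fun k' => ?_) k
      · simp only [Fin.cons_zero]; exact hwcomp.1
      · simp only [Fin.cons_succ]
        exact (hzcomp k' ((Fin.is_le k').trans (le_max_right α β))).1
    have hdistβ2 : ∀ k : Fin (β + 2),
        |Real.log ((Fin.cons (G2 i j) (fun k : Fin (β + 1) => F2 (i + (k : ℕ)) j)
            : Fin (β + 2) → ℝ) k)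
          - Real.log ((Fin.cons (w i j) (fun k : Fin (β + 1) => z (i + (k : ℕ)) j)
            : Fin (β + 2) → ℝ) k)| ≤ D := by
      intro k
      refine Fin.cases ?_ (fun k' => ?_) k
      · simp only [Fin.cons_zero]; exact hwcomp.2
      · simp only [Fin.cons_succ]
        exact (hzcomp k' ((Fin.is_le k').trans (le_max_right α β))).2
    refine ⟨?_, ?_, ?_, ?_⟩
    · refine le_trans (aux_step hc hlt hψ hf1pos hf1' hf2' hv1α hv'α (hzpos i (j + 1))
        (hzlow i j) (hzhigh i j) ?_ hD0 hdistα1) hstepD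
      rw [hF1]
      exact hf1' _ hv1α
    · refine le_trans (aux_step hc hlt hψ hf1pos hf1' hf2' hv2α hv'α (hzpos i (j + 1))
        (hzlow i j) (hzhigh i j) ?_ hD0 hdistα2) hstepD
      rw [hF2]
      exact hf2' _ hv2α
    · refine le_trans (aux_step hc hlt hφ hg1pos hg1' hg2' hv1β hv'β (hwpos (i + 1) j)
        (hwlow i j) (hwhigh i j) ?_ hD0 hdistβ1) hstepD
      rw [hG1]
      exact hg1' _ hv1β
    · refine le_trans (aux_step hc hlt hφ hg1pos hg1' hg2' hv2β hv'β (hwpos (i + 1) j)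
        (hwlow i j) (hwhigh i j) ?_ hD0 hdistβ2) hstepD
      rw [hG2]
      exact hg2' _ hv2β
  -- conclusion
  obtain ⟨h1, h2, h3, h4⟩ := key (i₀ + j₀ * (max α β + 1)) i₀ j₀ rfl
  set n := i₀ + j₀ * (max α β + 1) with hn_def
  have hexp : i₀ + 1 + j₀ * (max α β + 1) = n + 1 := by omega
  have hRpos : 0 < M ^ (4 * ∑ k ∈ Finset.range (n + 1), c ^ k) * ρ ^ (ct ^ (n + 1)) :=
    mul_pos (Real.rpow_pos_of_pos hM0 _) (Real.rpow_pos_of_pos hρ0 _)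
  have hAle : auxA c m r ct n
      ≤ Real.log (M ^ (4 * ∑ k ∈ Finset.range (n + 1), c ^ k) * ρ ^ (ct ^ (n + 1))) := by
    rw [Real.log_mul (Real.rpow_pos_of_pos hM0 _).ne' (Real.rpow_pos_of_pos hρ0 _).ne',
      Real.log_rpow hM0, Real.log_rpow hρ0]
    have hS0 : (0:ℝ) ≤ ∑ k ∈ Finset.range (n + 1), c ^ k :=
      Finset.sum_nonneg fun k _ => pow_nonneg hc k
    have : 0 ≤ m * ∑ k ∈ Finset.range (n + 1), c ^ k := mul_nonneg hm hS0
    unfold auxA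
    nlinarith
  rw [hexp]
  exact ⟨aux_ratio_of_log ((hP1 (j₀ + 1)).1 i₀) (hzpos i₀ (j₀ + 1)) hRpos (h1.trans hAle),
    aux_ratio_of_log ((hP2 (j₀ + 1)).1 i₀) (hzpos i₀ (j₀ + 1)) hRpos (h2.trans hAle),
    aux_ratio_of_log ((hP1 j₀).2 (i₀ + 1)) (hwpos (i₀ + 1) j₀) hRpos (h3.trans hAle),
    aux_ratio_of_log ((hP2 j₀).2 (i₀ + 1)) (hwpos (i₀ + 1) j₀) hRpos (h4.trans hAle)⟩
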